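/- Let D¹,…,D^N be pairwise orthogonal nonzero vectors in a real Hilbert space and p₁,…,p_N real numbers. The projection of X onto the intersection P = ⋂ᵢ {Y : ⟨Dⁱ,Y⟩ ≤ pᵢ} of the corresponding half-spaces is given by P_P(X) = X + ∑_{i : ⟨X,Dⁱ⟩ > pᵢ} ((pᵢ − ⟨X,Dⁱ⟩)/‖Dⁱ‖²) Dⁱ; that is, the projection onto the intersection equals the sum of the individual half-space corrections. -/

import Mathlib

open Finset

/-- Projection onto an intersection of half-spaces with mutually orthogonal normal
vectors: the projection of `X` equals `X` plus the sum of the individual half-space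
corrections over the violated constraints. -/
theorem projection_onto_orthogonal_halfspaces
    {H : Type*} [NormedAddCommGroup H] [InnerProductSpace ℝ H]
    (N : ℕ) (D : Fin N → H) (hD0 : ∀ i, D i ≠ 0)
    (horth : ∀ i j, i ≠ j → inner ℝ (D i) (D j) = (0 : ℝ))
    (p : Fin N → ℝ)
    (X q : H)
    (hq : q = X + ∑ i : Fin N,
      if p i < inner ℝ X (D i) then
        (((p i - inner ℝ X (D i)) / ‖D i‖ ^ 2) : ℝ) • D i
      else 0) :
    (∀ i, inner ℝ (D i) q ≤ p i) ∧
    ∀ Y : H, (∀ i, inner ℝ (D i) Y ≤ p i) → ‖X - q‖ ≤ ‖X - Y‖ := by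
  have key : ∀ j, (inner ℝ (D j) q : ℝ) =
      (if p j < inner ℝ X (D j) then p j else inner ℝ (D j) X) := by
    intro j
    rw [hq, inner_add_right, inner_sum, Finset.sum_eq_single j]
    · split_ifs with h
      · rw [real_inner_smul_right, real_inner_self_eq_norm_sq,
          real_inner_comm (D j) X]
        have hn : ‖D j‖ ^ 2 ≠ 0 :=
          pow_ne_zero 2 (norm_ne_zero_iff.mpr (hD0 j))
        have hn' : ‖D j‖ ≠ 0 := norm_ne_zero_iff.mpr (hD0 j)
        field_simp
        ring
      · simp
    · intro i _ hij
      split_ifs with h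
      · rw [real_inner_smul_right, horth j i hij.symm]
        ring
      · simp
    · simp
  constructor
  · intro i
    rw [key i]
    split_ifs with h
    · exact le_refl _
    · rw [real_inner_comm]
      exact le_of_not_gt h
  · intro Y hY
    have hXq : X - q = ∑ i : Fin N,
        (if p i < inner ℝ X (D i) then
          (((inner ℝ X (D i) - p i) / ‖D i‖ ^ 2) : ℝ) • D i else 0) := by
      rw [hq]
      rw [show X - (X + ∑ i : Fin N,
        if p i < inner ℝ X (D i) then
          (((p i - inner ℝ X (D i)) / ‖D i‖ ^ 2) : ℝ) • D i
        else 0) = -∑ i : Fin N,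
        (if p i < inner ℝ X (D i) then
          (((p i - inner ℝ X (D i)) / ‖D i‖ ^ 2) : ℝ) • D i
        else 0) from by abel, ← Finset.sum_neg_distrib]
      apply Finset.sum_congr rfl
      intro i _
      split_ifs with h
      · rw [← neg_smul]
        congr 1
        ring
      · simp
    have hpos : (0 : ℝ) ≤ inner ℝ (X - q) (q - Y) := by
      rw [hXq, sum_inner]
      apply Finset.sum_nonneg
      intro i _
      split_ifs with h
      · rw [real_inner_smul_left]
        apply mul_nonneg
        · apply div_nonneg _ (by positivity)
          linarith
        · rw [inner_sub_right, key i, if_pos h]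
          have := hY i
          linarith
      · simp
    have hsq : ‖X - q‖ ^ 2 ≤ ‖X - Y‖ ^ 2 := by
      have hxy : X - Y = (X - q) + (q - Y) := by abel
      rw [hxy, norm_add_sq_real]
      nlinarith [sq_nonneg ‖q - Y‖]
    rw [← Real.sqrt_sq (norm_nonneg (X - q)), ← Real.sqrt_sq (norm_nonneg (X - Y))]
    exact Real.sqrt_le_sqrt hsq
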